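/- Consider a multi-layer ScBM with population matrices P_l = ρ Y B_l Zᵀ, and suppose Σ_{l=1}^L B_lᵀ B_l has rank K' < K_z (the rank-deficient case). Let V ∈ ℝ^{n×K'} be any matrix with orthonormal columns and Λ a K'×K' invertible diagonal matrix such that Σ_{l=1}^L P_lᵀ P_l = V Λ Vᵀ. Then: (i) for all i, j with Z_{i∗} = Z_{j∗}, one has V_{i∗} = V_{j∗}; (ii) if the rows of Δ_z^{-1} Q^C are mutually distinct and there is ξ_n > 0 with min_{1≤k≠k'≤K_z} ‖Q^C_{k∗}/√(n_k^z) − Q^C_{k'∗}/√(n_{k'}^z)‖₂ ≥ ξ_n, then for all i, j with Z_{i∗} ≠ Z_{j∗}, one has ‖V_{i∗} − V_{j∗}‖₂ ≥ ξ_n. -/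
import Mathlib


open Matrix Finset
open scoped BigOperators Classical

noncomputable section

/-- Membership matrix associated with a cluster assignment `g`. -/
def memb {n K : ℕ} (g : Fin n → Fin K) : Matrix (Fin n) (Fin K) ℝ :=
  Matrix.of fun i k => if g i = k then 1 else 0

/-- Size of cluster `k` under assignment `g`. -/
def csize {n K : ℕ} (g : Fin n → Fin K) (k : Fin K) : ℕ :=
  (Finset.univ.filter fun i => g i = k).card

/-- Diagonal matrix Δ = diag(√n_1, …, √n_K). -/
def Dmat {n K : ℕ} (g : Fin n → Fin K) : Matrix (Fin K) (Fin K) ℝ :=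
  Matrix.diagonal fun k => Real.sqrt (csize g k)

/-- Diagonal matrix Δ⁻¹ = diag(1/√n_1, …, 1/√n_K). -/
def DmatInv {n K : ℕ} (g : Fin n → Fin K) : Matrix (Fin K) (Fin K) ℝ :=
  Matrix.diagonal fun k => (Real.sqrt (csize g k))⁻¹

/-- Euclidean distance between the `i`-th and `j`-th rows of `M`. -/
def rowDist {n K : ℕ} (M : Matrix (Fin n) (Fin K) ℝ) (i j : Fin n) : ℝ :=
  Real.sqrt (∑ m, (M i m - M j m) ^ 2)

/-- Row extraction: multiplying a membership matrix picks out the row of the cluster. -/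
lemma memb_mul_apply {n K m : ℕ} (g : Fin n → Fin K) (A : Matrix (Fin K) (Fin m) ℝ)
    (i : Fin n) (j : Fin m) : (memb g * A) i j = A (g i) j := by
  simp [memb, Matrix.mul_apply]

/-- Gram matrix of a membership matrix is the diagonal of cluster sizes. -/
lemma membT_mul_memb {n K : ℕ} (g : Fin n → Fin K) :
    (memb g)ᵀ * memb g = Matrix.diagonal (fun k => (csize g k : ℝ)) := by
  ext k k'
  simp only [Matrix.mul_apply, Matrix.transpose_apply, memb, Matrix.of_apply,
    Matrix.diagonal_apply]
  by_cases h : k = k'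
  · subst h
    rw [if_pos rfl]
    rw [Finset.sum_congr rfl (fun i _ => by split_ifs <;> simp : ∀ i ∈ Finset.univ,
      ((if g i = k then (1:ℝ) else 0) * if g i = k then 1 else 0) = if g i = k then 1 else 0)]
    simp [csize, Finset.sum_boole]
  · rw [if_neg h]
    refine Finset.sum_eq_zero fun i _ => ?_
    by_cases h1 : g i = k <;> by_cases h2 : g i = k' <;> simp_all

/-- Alignment of two column-orthonormal eigendecompositions of the same matrix. -/
lemma align_orth {n K : ℕ} (V X : Matrix (Fin n) (Fin K) ℝ)
    (hV : Vᵀ * V = 1) (hX : Xᵀ * X = 1)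
    (d e : Fin K → ℝ) (hd : ∀ m, d m ≠ 0)
    (h : V * Matrix.diagonal d * Vᵀ = X * Matrix.diagonal e * Xᵀ) :
    ∃ W : Matrix (Fin K) (Fin K) ℝ, V = X * W ∧ Wᵀ * W = 1 ∧ W * Wᵀ = 1 := by
  set M : Matrix (Fin K) (Fin K) ℝ :=
    Matrix.diagonal (fun m => (d m)⁻¹) * (Vᵀ * X * Matrix.diagonal e) with hM
  have hdd : Matrix.diagonal (fun m => (d m)⁻¹) * Matrix.diagonal d
      = (1 : Matrix (Fin K) (Fin K) ℝ) := by
    rw [Matrix.diagonal_mul_diagonal]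
    have : (fun m => (d m)⁻¹ * d m) = fun _ => (1:ℝ) := funext fun m => inv_mul_cancel₀ (hd m)
    rw [this, Matrix.diagonal_one]
  have h1 : Matrix.diagonal d * Vᵀ = Vᵀ * (X * Matrix.diagonal e * Xᵀ) := by
    rw [← h]
    calc Matrix.diagonal d * Vᵀ = (Vᵀ * V) * Matrix.diagonal d * Vᵀ := by rw [hV, Matrix.one_mul]
      _ = Vᵀ * (V * Matrix.diagonal d * Vᵀ) := by
          rw [Matrix.mul_assoc, Matrix.mul_assoc, Matrix.mul_assoc]
  have hVT : Vᵀ = M * Xᵀ := by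
    calc Vᵀ = Matrix.diagonal (fun m => (d m)⁻¹) * (Matrix.diagonal d * Vᵀ) := by
          rw [← Matrix.mul_assoc, hdd, Matrix.one_mul]
      _ = M * Xᵀ := by
          rw [h1, hM]
          simp only [Matrix.mul_assoc]
  have hVXM : V = X * Mᵀ := by
    have := congrArg Matrix.transpose hVT
    simpa [Matrix.transpose_mul] using this
  have hMMT : M * Mᵀ = 1 := by
    calc M * Mᵀ = M * (Xᵀ * X) * Mᵀ := by rw [hX, Matrix.mul_one]
      _ = (M * Xᵀ) * (M * Xᵀ)ᵀ := by simp [Matrix.transpose_mul, Matrix.mul_assoc]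
      _ = Vᵀ * Vᵀᵀ := by rw [← hVT]
      _ = 1 := by rw [Matrix.transpose_transpose, hV]
  exact ⟨Mᵀ, hVXM, by simpa using hMMT, mul_eq_one_comm.mpr hMMT⟩

/-- rank-deficient case of Lemma 2.3 (column clusters). -/
theorem stmt4
    (n L Ky Kz K' : ℕ) (hn : 0 < n) (hL : 0 < L)
    (ρ : ℝ) (hρ0 : 0 < ρ) (hρ1 : ρ ≤ 1)
    (gy : Fin n → Fin Ky) (gz : Fin n → Fin Kz)
    (hny : ∀ k, 0 < csize gy k) (hnz : ∀ k, 0 < csize gz k)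
    (B : Fin L → Matrix (Fin Ky) (Fin Kz) ℝ)
    (hB : ∀ l a b, 0 ≤ B l a b ∧ B l a b ≤ 1)
    (P : Fin L → Matrix (Fin n) (Fin n) ℝ)
    (hP : ∀ l, P l = ρ • (memb gy * B l * (memb gz)ᵀ))
    -- rank-deficient case: rank(∑ B_lᵀ B_l) = K' < K_z
    (hrank : (∑ l, (B l)ᵀ * B l).rank = K') (hKlt : K' < Kz)
    -- eigendecomposition ∑ P_lᵀ P_l = V Λ Vᵀ with V column-orthonormal, Λ invertible diagonal
    (V : Matrix (Fin n) (Fin K') ℝ) (hVorth : Vᵀ * V = 1)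
    (d : Fin K' → ℝ) (hd : ∀ m, d m ≠ 0)
    (hdecomp : ∑ l, (P l)ᵀ * P l = V * Matrix.diagonal d * Vᵀ)
    -- eigendecomposition Δ_z (∑ B_lᵀ Δ_y² B_l) Δ_z = Q^C D^C (Q^C)ᵀ,
    -- Q^C column-orthonormal, D^C invertible diagonal
    (QC : Matrix (Fin Kz) (Fin K') ℝ) (hQorth : QCᵀ * QC = 1)
    (dC : Fin K' → ℝ) (hdC : ∀ m, dC m ≠ 0)
    (hQdec : Dmat gz * (∑ l, (B l)ᵀ * (Dmat gy) ^ 2 * B l) * Dmat gz =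
      QC * Matrix.diagonal dC * QCᵀ) :
    -- (i)
    (∀ i j : Fin n, memb gz i = memb gz j → V i = V j) ∧
    -- (ii)
    (∀ ξ : ℝ, 0 < ξ →
      (∀ k k' : Fin Kz, k ≠ k' → (DmatInv gz * QC) k ≠ (DmatInv gz * QC) k') →
      (∀ k k' : Fin Kz, k ≠ k' →
        ξ ≤ Real.sqrt (∑ m, (QC k m / Real.sqrt (csize gz k) -
              QC k' m / Real.sqrt (csize gz k')) ^ 2)) →
      ∀ i j : Fin n, memb gz i ≠ memb gz j → ξ ≤ rowDist V i j) := by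
  set Z := memb gz with hZ
  set R : Matrix (Fin Kz) (Fin K') ℝ := DmatInv gz * QC with hRdef
  set X : Matrix (Fin n) (Fin K') ℝ := Z * R with hXdef
  have hsqrtz : ∀ k, Real.sqrt (csize gz k) ≠ 0 := fun k => by
    have : (0:ℝ) < csize gz k := by exact_mod_cast hnz k
    positivity
  have hZTZ : Zᵀ * Z = Matrix.diagonal (fun k => (csize gz k : ℝ)) := membT_mul_memb gz
  have hmid : DmatInv gz * Matrix.diagonal (fun k => (csize gz k : ℝ)) * DmatInv gz = 1 := by
    rw [DmatInv, Matrix.diagonal_mul_diagonal, Matrix.diagonal_mul_diagonal]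
    have : (fun k => (Real.sqrt (csize gz k))⁻¹ * (csize gz k : ℝ) * (Real.sqrt (csize gz k))⁻¹)
        = fun _ => (1:ℝ) := by
      funext k
      have h1 : Real.sqrt (csize gz k) * Real.sqrt (csize gz k) = (csize gz k : ℝ) :=
        Real.mul_self_sqrt (by positivity)
      rw [show ((Real.sqrt (csize gz k))⁻¹ * (csize gz k:ℝ) * (Real.sqrt (csize gz k))⁻¹)
          = (csize gz k:ℝ) / (Real.sqrt (csize gz k) * Real.sqrt (csize gz k)) by ring, h1,
        div_self (Nat.cast_ne_zero.mpr (hnz k).ne')]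
    rw [this, Matrix.diagonal_one]
  have hDinvT : (DmatInv gz)ᵀ = DmatInv gz := Matrix.diagonal_transpose _
  have hDT : (Dmat gz)ᵀ = Dmat gz := Matrix.diagonal_transpose _
  have hXorth : Xᵀ * X = 1 := by
    have : Xᵀ * X = QCᵀ * (DmatInv gz * (Zᵀ * Z) * DmatInv gz) * QC := by
      rw [hXdef, hRdef]
      simp only [Matrix.transpose_mul, hDinvT, Matrix.mul_assoc]
    rw [this, hZTZ, hmid, Matrix.mul_one, hQorth]
  have hYTY : (memb gy)ᵀ * memb gy = (Dmat gy)^2 := by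
    rw [membT_mul_memb gy, Dmat, sq, Matrix.diagonal_mul_diagonal]
    exact congrArg Matrix.diagonal
      (funext fun k => (Real.mul_self_sqrt (Nat.cast_nonneg _)).symm)
  have hZfact : Z * DmatInv gz * Dmat gz = Z := by
    rw [Matrix.mul_assoc, DmatInv, Dmat, Matrix.diagonal_mul_diagonal]
    have : (fun k => (Real.sqrt (csize gz k))⁻¹ * Real.sqrt (csize gz k)) = fun _ => (1:ℝ) :=
      funext fun k => inv_mul_cancel₀ (hsqrtz k)
    rw [this, Matrix.diagonal_one, Matrix.mul_one]
  set U : Matrix (Fin n) (Fin Kz) ℝ := Z * DmatInv gz with hUdef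
  have hPlPl : ∀ l, (P l)ᵀ * P l = ρ^2 • (Z * ((B l)ᵀ * (Dmat gy)^2 * B l) * Zᵀ) := by
    intro l
    rw [hP l]
    rw [Matrix.transpose_smul, Matrix.smul_mul, Matrix.mul_smul, smul_smul, ← sq]
    congr 1
    simp only [Matrix.transpose_mul, Matrix.transpose_transpose]
    calc ((memb gz)ᵀᵀ * ((B l)ᵀ * (memb gy)ᵀ)) * (memb gy * B l * (memb gz)ᵀ)
        = Z * ((B l)ᵀ * (((memb gy)ᵀ * memb gy) * (B l * Zᵀ))) := by
          simp only [Matrix.transpose_transpose, Matrix.mul_assoc, hZ]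
      _ = Z * ((B l)ᵀ * (Dmat gy)^2 * B l) * Zᵀ := by
          rw [hYTY]; simp only [Matrix.mul_assoc]
  have hsum : ∑ l, (P l)ᵀ * P l
      = ρ^2 • (Z * (∑ l, (B l)ᵀ * (Dmat gy)^2 * B l) * Zᵀ) := by
    rw [Finset.sum_congr rfl fun l _ => hPlPl l, ← Finset.smul_sum]
    congr 1
    rw [← Matrix.sum_mul, ← Matrix.mul_sum]
  set Msum := ∑ l, (B l)ᵀ * (Dmat gy)^2 * B l with hMs
  have hXU : X = U * QC := by rw [hXdef, hRdef, hUdef, Matrix.mul_assoc]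
  have hZMZ : Z * Msum * Zᵀ = X * Matrix.diagonal dC * Xᵀ := by
    have hZT : Zᵀ = Dmat gz * Uᵀ := by
      rw [← hZfact, Matrix.transpose_mul, hDT]
    calc Z * Msum * Zᵀ = U * (Dmat gz * Msum * Dmat gz) * Uᵀ := by
          rw [hZT, ← hZfact]; simp only [Matrix.mul_assoc]
      _ = U * (QC * Matrix.diagonal dC * QCᵀ) * Uᵀ := by rw [hQdec]
      _ = X * Matrix.diagonal dC * Xᵀ := by
          rw [hXU]; simp only [Matrix.transpose_mul, Matrix.mul_assoc]
  have hdiag : Matrix.diagonal (fun m => ρ^2 * dC m) = ρ^2 • Matrix.diagonal dC := by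
    ext a b
    by_cases h : a = b <;> simp [Matrix.diagonal_apply, h]
  have hdecomp2 : ∑ l, (P l)ᵀ * P l = X * Matrix.diagonal (fun m => ρ^2 * dC m) * Xᵀ := by
    rw [hsum, hZMZ, hdiag, Matrix.mul_smul, Matrix.smul_mul]
  -- apply the alignment lemma
  obtain ⟨W, hVXW, hWTW, hWWT⟩ := align_orth V X hVorth hXorth d (fun m => ρ^2 * dC m) hd
    (hdecomp.symm.trans hdecomp2)
  -- row formulas
  have hXrow : ∀ i p, X i p = R (gz i) p := fun i p => memb_mul_apply gz R i p
  have hVrow : ∀ i m, V i m = ∑ p, R (gz i) p * W p m := by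
    intro i m
    rw [hVXW, Matrix.mul_apply]
    exact Finset.sum_congr rfl fun p _ => by rw [hXrow]
  have hRentry : ∀ k p, R k p = QC k p / Real.sqrt (csize gz k) := by
    intro k p
    rw [hRdef, Matrix.mul_apply]
    rw [Finset.sum_congr rfl fun k' _ => by
      rw [DmatInv, Matrix.diagonal_apply, ite_mul, zero_mul]]
    rw [Finset.sum_ite_eq, if_pos (Finset.mem_univ k), div_eq_inv_mul]
  have hmemb_eq : ∀ i j : Fin n, memb gz i = memb gz j → gz i = gz j := by
    intro i j hij
    have := congrFun hij (gz i)
    simp only [memb, Matrix.of_apply, if_pos rfl] at this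
    by_cases h : gz j = gz i
    · exact h.symm
    · rw [if_neg h] at this; norm_num at this
  have hWW' : ∀ p q, ∑ m, W p m * W q m = if p = q then (1:ℝ) else 0 := by
    intro p q
    have h2 : (W * Wᵀ) p q = (1 : Matrix (Fin K') (Fin K') ℝ) p q := by rw [hWWT]
    rw [Matrix.mul_apply] at h2
    simp only [Matrix.transpose_apply] at h2
    rw [Matrix.one_apply] at h2
    exact h2
  have hsq : ∀ (v : Fin K' → ℝ), ∑ m, (∑ p, v p * W p m)^2 = ∑ p, (v p)^2 := by
    intro v
    calc ∑ m, (∑ p, v p * W p m)^2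
        = ∑ m, ∑ p, ∑ q, (v p * W p m) * (v q * W q m) := by
          refine Finset.sum_congr rfl fun m _ => ?_
          rw [sq, Finset.sum_mul_sum]
      _ = ∑ p, ∑ q, v p * v q * ∑ m, W p m * W q m := by
          rw [Finset.sum_comm]
          refine Finset.sum_congr rfl fun p _ => ?_
          rw [Finset.sum_comm]
          refine Finset.sum_congr rfl fun q _ => ?_
          rw [Finset.mul_sum]
          exact Finset.sum_congr rfl fun m _ => by ring
      _ = ∑ p, (v p)^2 := by
          refine Finset.sum_congr rfl fun p _ => ?_
          rw [Finset.sum_congr rfl fun q _ => by rw [hWW' p q]]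
          simp [sq]
  constructor
  · -- (i)
    intro i j hij
    funext m
    rw [hVrow, hVrow, hmemb_eq i j hij]
  · -- (ii)
    intro ξ hξ hdist hsep i j hij
    have hgz : gz i ≠ gz j := fun h => hij (by
      show memb gz i = memb gz j
      funext k
      simp only [memb, Matrix.of_apply, h])
    have hdiff : ∀ m, V i m - V j m = ∑ p, (R (gz i) p - R (gz j) p) * W p m := by
      intro m
      rw [hVrow, hVrow, ← Finset.sum_sub_distrib]
      exact Finset.sum_congr rfl fun p _ => by ring
    have hkey : ∑ m, (V i m - V j m)^2 = ∑ p, (R (gz i) p - R (gz j) p)^2 := by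
      rw [Finset.sum_congr rfl fun m _ => by rw [hdiff m]]
      exact hsq _
    have := hsep (gz i) (gz j) hgz
    have hsum2 : ∑ p, (R (gz i) p - R (gz j) p)^2
        = ∑ m, (QC (gz i) m / Real.sqrt (csize gz (gz i))
            - QC (gz j) m / Real.sqrt (csize gz (gz j)))^2 :=
      Finset.sum_congr rfl fun p _ => by rw [hRentry, hRentry]
    rw [rowDist, hkey, hsum2]
    exact this
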